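/- arXiv:0910.3700 — 3 statements merged into one kernel-verified Lean document; each statement's English description precedes it below -/
import Mathlib

section
/- Let R be a commutative ring, Ω a class of group homomorphisms, and (E,p) a localization functor on the category of groups with respect to Ω. For a group π, let π^{{n}} denote the n-th term of the universal R-local derived series determined by (E,p). Then for every group homomorphism α: π → G belonging to Ω and every n ∈ ℕ, one has α⁻¹(G^{{n}}) = π^{{n}}; in particular α maps π^{{n}} into G^{{n}} and the induced homomorphism π/π^{{n}} → G/G^{{n}} is injective. -/
open CategoryTheory TensorProduct

/-- An object `A` is local with respect to a class of morphisms `Ω` if every morphism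
`g : X ⟶ A` factors uniquely through every morphism `f : X ⟶ Y` of `Ω`. -/
def IsLocalObject {C : Type*} [Category C] (Ω : MorphismProperty C) (A : C) : Prop :=
  ∀ ⦃X Y : C⦄ (f : X ⟶ Y), Ω f → ∀ g : X ⟶ A, ∃! h : Y ⟶ A, f ≫ h = g

/-- `(E, p)` is a localization functor with respect to `Ω`. -/
structure IsLocalizationFunctor {C : Type*} [Category C] (Ω : MorphismProperty C)
    (E : C ⥤ C) (p : 𝟭 C ⟶ E) : Prop where
  local_obj : ∀ X : C, IsLocalObject Ω (E.obj X)
  universal : ∀ (X A : C), IsLocalObject Ω A → ∀ q : X ⟶ A,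
    ∃! h : E.obj X ⟶ A, p.app X ≫ h = q

/-- The kernel of `K → (K/[K,K]) ⊗_ℤ R`, abelianization followed by `x ↦ x ⊗ 1`. -/
def derivedKer (R : Type*) [CommRing R] (K : Type*) [Group K] : Subgroup K where
  carrier := {x : K |
    (Additive.ofMul (Abelianization.of x) ⊗ₜ[ℤ] (1 : R) :
      TensorProduct ℤ (Additive (Abelianization K)) R) = 0}
  one_mem' := by
    have : (Additive.ofMul (Abelianization.of (1 : K)) :
        Additive (Abelianization K)) = 0 := by
      simp
    simp [this]
  mul_mem' := by
    intro a b ha hb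
    have : (Additive.ofMul (Abelianization.of (a * b)) :
        Additive (Abelianization K))
        = Additive.ofMul (Abelianization.of a) + Additive.ofMul (Abelianization.of b) := by
      simp [ofMul_mul]
    simp only [Set.mem_setOf_eq] at *
    rw [this, add_tmul, ha, hb, add_zero]
  inv_mem' := by
    intro a ha
    have : (Additive.ofMul (Abelianization.of a⁻¹) :
        Additive (Abelianization K))
        = -Additive.ofMul (Abelianization.of a) := by
      simp [ofMul_inv]
    simp only [Set.mem_setOf_eq] at *
    rw [this, neg_tmul, ha, neg_zero]

/-- The `R`-derived series of a group `H`:  `H^0 = H` and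
`H^{n+1} = ker (H^n → (H^n/[H^n,H^n]) ⊗_ℤ R)`. -/
def rDerivedSeries (R : Type*) [CommRing R] (H : Type*) [Group H] : ℕ → Subgroup H
  | 0 => ⊤
  | n + 1 => Subgroup.map (rDerivedSeries R H n).subtype
      (derivedKer R (rDerivedSeries R H n))

/-- The universal `R`-local derived series of a group `π` determined by a localization
functor `(E, p)` on the category of groups: `π^{{n}} = p_π⁻¹((E π)^n)`. -/
def univLocalDerivedSeries (R : Type*) [CommRing R] (E : GrpCat ⥤ GrpCat) (p : 𝟭 GrpCat ⟶ E)
    (π : GrpCat) (n : ℕ) : Subgroup π :=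
  Subgroup.comap (p.app π).hom (rDerivedSeries R (E.obj π) n)

lemma derivedKer_mem_iff {R : Type*} [CommRing R] {H K : Type*} [Group H] [Group K]
    (e : H ≃* K) (x : H) : x ∈ derivedKer R H ↔ e x ∈ derivedKer R K := by
  let φ : Additive (Abelianization H) ≃+ Additive (Abelianization K) :=
    MulEquiv.toAdditive e.abelianizationCongr
  let ψ := TensorProduct.congr φ.toIntLinearEquiv (LinearEquiv.refl ℤ R)
  have key : ψ ((Additive.ofMul (Abelianization.of x) ⊗ₜ[ℤ] (1 : R)))
      = Additive.ofMul (Abelianization.of (e x)) ⊗ₜ[ℤ] (1 : R) := by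
    simp [ψ, φ]
  have hH : x ∈ derivedKer R H ↔
      (Additive.ofMul (Abelianization.of x) ⊗ₜ[ℤ] (1 : R) :
        TensorProduct ℤ (Additive (Abelianization H)) R) = 0 := Iff.rfl
  have hK : e x ∈ derivedKer R K ↔
      (Additive.ofMul (Abelianization.of (e x)) ⊗ₜ[ℤ] (1 : R) :
        TensorProduct ℤ (Additive (Abelianization K)) R) = 0 := Iff.rfl
  rw [hH, hK, ← key, map_eq_zero_iff ψ ψ.injective]

lemma rDerivedSeries_mem_iff (R : Type*) [CommRing R] {H K : Type*} [Group H] [Group K]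
    (e : H ≃* K) (n : ℕ) (x : H) :
    x ∈ rDerivedSeries R H n ↔ e x ∈ rDerivedSeries R K n := by
  induction n generalizing x with
  | zero => simp [rDerivedSeries]
  | succ n ih =>
    let e' : ↥(rDerivedSeries R H n) ≃* ↥(rDerivedSeries R K n) :=
      { toFun := fun y => ⟨e y, (ih y).mp y.2⟩
        invFun := fun z => ⟨e.symm z, (ih (e.symm (z : K))).mpr (by simp)⟩
        left_inv := fun y => by ext; simp
        right_inv := fun z => by ext; simp
        map_mul' := fun a b => by ext; simp }
    show x ∈ Subgroup.map _ _ ↔ e x ∈ Subgroup.map _ _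
    simp only [Subgroup.mem_map]
    constructor
    · rintro ⟨y, hy, rfl⟩
      exact ⟨e' y, (derivedKer_mem_iff e' y).mp hy, rfl⟩
    · rintro ⟨z, hz, hzx⟩
      refine ⟨e'.symm z, (derivedKer_mem_iff e' _).mpr (by simpa using hz), ?_⟩
      have hzx' : (z : K) = e x := hzx
      show e.symm (z : K) = x
      rw [hzx']; simp

/-- For a homomorphism `α : π ⟶ G` in `Ω`, the preimage of `G^{{n}}` is exactly `π^{{n}}`;
in particular `α` maps `π^{{n}}` into `G^{{n}}` and the induced homomorphism
`π/π^{{n}} → G/G^{{n}}` is injective. -/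
theorem univLocalDerivedSeries_comap_eq (R : Type*) [CommRing R]
    (Ω : MorphismProperty GrpCat) (E : GrpCat ⥤ GrpCat) (p : 𝟭 GrpCat ⟶ E)
    (hE : IsLocalizationFunctor Ω E p)
    (π G : GrpCat) (α : π ⟶ G) (hα : Ω α) (n : ℕ) :
    Subgroup.comap α.hom (univLocalDerivedSeries R E p G n)
      = univLocalDerivedSeries R E p π n := by
  obtain ⟨h, hh, hhu⟩ := hE.local_obj π α hα (p.app π)
  obtain ⟨s, hs, hsu⟩ := hE.universal G (E.obj π) (hE.local_obj π) h
  have nat : α ≫ p.app G = p.app π ≫ E.map α := by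
    have := p.naturality α
    simpa using this
  have eq1 : E.map α ≫ s = 𝟙 (E.obj π) := by
    obtain ⟨u, hu, huu⟩ := hE.universal π (E.obj π) (hE.local_obj π) (p.app π)
    have h1 : p.app π ≫ (E.map α ≫ s) = p.app π := by
      rw [← Category.assoc, ← nat, Category.assoc, hs, hh]
    rw [huu _ h1, huu (𝟙 _) (Category.comp_id _)]
  have eq2 : h ≫ E.map α = p.app G := by
    obtain ⟨u, hu, huu⟩ := hE.local_obj G α hα (α ≫ p.app G)
    have h1 : α ≫ (h ≫ E.map α) = α ≫ p.app G := by
      rw [← Category.assoc, hh, nat]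
    rw [huu _ h1, huu (p.app G) rfl]
  have eq3 : s ≫ E.map α = 𝟙 (E.obj G) := by
    obtain ⟨u, hu, huu⟩ := hE.universal G (E.obj G) (hE.local_obj G) (p.app G)
    have h1 : p.app G ≫ (s ≫ E.map α) = p.app G := by
      rw [← Category.assoc, hs, eq2]
    rw [huu _ h1, huu (𝟙 _) (Category.comp_id _)]
  let e : (E.obj π : Type _) ≃* (E.obj G : Type _) :=
    { toFun := (E.map α).hom
      invFun := s.hom
      left_inv := fun x => by
        have := congrArg (fun f : E.obj π ⟶ E.obj π => f.hom x) eq1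
        simpa using this
      right_inv := fun x => by
        have := congrArg (fun f : E.obj G ⟶ E.obj G => f.hom x) eq3
        simpa using this
      map_mul' := map_mul _ }
  ext x
  simp only [univLocalDerivedSeries, Subgroup.mem_comap]
  have hx : (p.app G).hom (α.hom x) = (E.map α).hom ((p.app π).hom x) := by
    have := congrArg (fun f : π ⟶ E.obj G => f.hom x) nat
    simpa using this
  exact Iff.trans
    (Iff.of_eq (congrArg (fun y => y ∈ rDerivedSeries R (E.obj G) n) hx))
    (rDerivedSeries_mem_iff R e n _).symm
end

section
/- Let p be a prime and G a finite p-group. Let ε: (ℤ/p)[G] → ℤ/p be the augmentation homomorphism of the group ring, sending every group element to 1. If A is a square matrix over (ℤ/p)[G] such that the matrix obtained by applying ε to each entry of A is invertible over ℤ/p, then A is invertible over (ℤ/p)[G]. (Equivalently, the Cohn localization of the group ring (ℤ/p)[G] with respect to its augmentation map to ℤ/p is (ℤ/p)[G] itself.) -/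
open MonoidAlgebra Finset

section Basics
variable (k : Type*) [CommRing k] (G : Type*) [Group G]

noncomputable def eps : MonoidAlgebra k G →ₐ[k] k := (MonoidAlgebra.lift k k G) 1

lemma eps_single (g : G) (a : k) : eps k G (MonoidAlgebra.single g a) = a := by
  simp [eps, MonoidAlgebra.lift_single]

noncomputable def augKer : Submodule k (MonoidAlgebra k G) :=
  LinearMap.ker (eps k G).toLinearMap

lemma mem_augKer {x : MonoidAlgebra k G} : x ∈ augKer k G ↔ eps k G x = 0 := Iff.rfl

variable {G}

lemma central_commute {z : G} (hz : z ∈ Subgroup.center G) (r : MonoidAlgebra k G) :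
    (MonoidAlgebra.single z (1:k)) * r = r * (MonoidAlgebra.single z (1:k)) := by
  induction r using MonoidAlgebra.induction_linear with
  | zero => simp
  | add f g hf hg => rw [mul_add, add_mul, hf, hg]
  | single g a =>
      rw [MonoidAlgebra.single_mul_single, MonoidAlgebra.single_mul_single,
        one_mul, mul_one, (Subgroup.mem_center_iff.mp hz g)]

lemma central_sub_one_commute {z : G} (hz : z ∈ Subgroup.center G) (r : MonoidAlgebra k G) :
    (MonoidAlgebra.single z (1:k) - 1) * r = r * (MonoidAlgebra.single z (1:k) - 1) := by
  rw [sub_mul, mul_sub, one_mul, mul_one, central_commute k hz]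

end Basics

section Span
variable {k : Type*} [CommRing k] {G : Type*} [Group G]

lemma mul_mem_span_pow {z : G} (hz : z ∈ Subgroup.center G) {a b : ℕ}
    {x y : MonoidAlgebra k G}
    (hx : x ∈ Ideal.span {(MonoidAlgebra.single z (1:k) - 1) ^ a})
    (hy : y ∈ Ideal.span {(MonoidAlgebra.single z (1:k) - 1) ^ b}) :
    x * y ∈ Ideal.span {(MonoidAlgebra.single z (1:k) - 1) ^ (a + b)} := by
  set c := MonoidAlgebra.single z (1:k) - 1 with hc
  obtain ⟨r, rfl⟩ := Submodule.mem_span_singleton.mp hx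
  obtain ⟨s, rfl⟩ := Submodule.mem_span_singleton.mp hy
  have hcomm : Commute (c ^ a) s := by
    apply Commute.pow_left
    exact (central_sub_one_commute k hz s)
  apply Submodule.mem_span_singleton.mpr
  refine ⟨r * s, ?_⟩
  simp only [smul_eq_mul]
  calc r * s * c ^ (a + b) = r * (s * c ^ a) * c ^ b := by rw [pow_add]; rw [mul_assoc, mul_assoc, mul_assoc]
    _ = r * (c ^ a * s) * c ^ b := by rw [hcomm.eq]
    _ = r * c ^ a * (s * c ^ b) := by rw [mul_assoc, mul_assoc, mul_assoc]

lemma pow_le_pow_submodule {A : Type*} [Semiring A] [Algebra k A]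
    {U V : Submodule k A} (h : U ≤ V) : ∀ n, U ^ n ≤ V ^ n := by
  intro n
  induction n with
  | zero => simp
  | succ m ih => rw [pow_succ, pow_succ]; exact mul_le_mul' ih h

lemma span_c_pow_le {z : G} (hz : z ∈ Subgroup.center G) :
    ∀ q, (Submodule.restrictScalars k (Ideal.span {MonoidAlgebra.single z (1:k) - 1})) ^ q ≤
      Submodule.restrictScalars k (Ideal.span {(MonoidAlgebra.single z (1:k) - 1) ^ q}) := by
  intro q
  induction q with
  | zero =>
      intro x _
      simp only [pow_zero, Submodule.restrictScalars_mem]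
      rw [Ideal.span_singleton_one]
      trivial
  | succ m ih =>
      rw [pow_succ]
      refine Submodule.mul_le.mpr fun x hx y hy => ?_
      exact mul_mem_span_pow hz (ih hx) (by simpa using hy)

end Span

section KerPi
variable {k : Type*} [CommRing k] {G : Type*} [Group G] [Finite G]

lemma ker_mapDomain_le_span {z : G} (_hz : z ∈ Subgroup.center G)
    (x : MonoidAlgebra k G)
    (hx : MonoidAlgebra.mapDomain (QuotientGroup.mk (s := Subgroup.zpowers z)) x = 0) :
    x ∈ Ideal.span {MonoidAlgebra.single z (1:k) - 1} := by
  set N := Subgroup.zpowers z with hNdef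
  set c := MonoidAlgebra.single z (1:k) - 1 with hc
  set σ : G → G := fun g => (QuotientGroup.mk (s := N) g).out with hσ
  set T : MonoidAlgebra k G → MonoidAlgebra k G := MonoidAlgebra.mapDomain σ with hT
  have hTsingle : ∀ (g : G) (a : k),
      T (MonoidAlgebra.single g a) = MonoidAlgebra.single (σ g) a := fun g a =>
    MonoidAlgebra.mapDomain_single
  have hTadd : ∀ f g : MonoidAlgebra k G, T (f + g) = T f + T g := fun f g =>
    MonoidAlgebra.mapDomain_add _ _ _
  have hT0 : T 0 = 0 := MonoidAlgebra.mapDomain_zero _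
  have hstep : ∀ f g : MonoidAlgebra k G, f - T f ∈ Ideal.span {c} →
      g - T g ∈ Ideal.span {c} → (f + g) - T (f + g) ∈ Ideal.span {c} := by
    intro f g hf hg
    have h : (f + g) - T (f + g) = (f - T f) + (g - T g) := by rw [hTadd]; abel
    rw [h]; exact add_mem hf hg
  have key : ∀ y : MonoidAlgebra k G, y - T y ∈ Ideal.span {c} := by
    intro y
    induction y using MonoidAlgebra.induction_linear with
    | zero => rw [hT0]; simp
    | add f g hf hg =>
        exact hstep f g hf hg
    | single g a =>
        rw [hTsingle]
        set g' := σ g with hg'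
        have hmk : (QuotientGroup.mk g' : G ⧸ N) = QuotientGroup.mk g :=
          QuotientGroup.out_eq' _
        have hmem : g'⁻¹ * g ∈ N := QuotientGroup.eq.mp hmk
        obtain ⟨m, hm⟩ := mem_powers_iff_mem_zpowers.mpr hmem
        have hm' : z ^ m = g'⁻¹ * g := hm
        have hg : g = g' * z ^ m := by rw [hm']; group
        have key2 : MonoidAlgebra.single g a - MonoidAlgebra.single g' a
            = MonoidAlgebra.single g' a *
              ((∑ i ∈ Finset.range m, (MonoidAlgebra.single z (1:k)) ^ i) * c) := by
          rw [hc, geom_sum_mul, mul_sub, mul_one, MonoidAlgebra.single_pow,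
            MonoidAlgebra.single_mul_single, one_pow, mul_one, ← hg]
        rw [key2]
        exact Ideal.mul_mem_left _ _ (Ideal.mul_mem_left _ _ (Ideal.subset_span rfl))
  have h2 : T x = 0 := by
    have hcomp : T x = MonoidAlgebra.mapDomain (fun q : G ⧸ N => q.out)
        (MonoidAlgebra.mapDomain (QuotientGroup.mk (s := N)) x) :=
      congrArg MonoidAlgebra.ofCoeff Finsupp.mapDomain_comp
    rw [hcomp, hx, MonoidAlgebra.mapDomain_zero]
  simpa [h2, sub_zero] using key x

end KerPi

section Main
universe u
variable (p : ℕ) [Fact p.Prime]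

theorem augKer_pow_eq_bot : ∀ (m : ℕ) (G : Type u) (_ : Group G) (_ : Finite G),
    Nat.card G = m → IsPGroup p G →
    ∃ N, 0 < N ∧ (augKer (ZMod p) G) ^ N = ⊥ := by
  intro m
  induction m using Nat.strong_induction_on with
  | _ m ih =>
    intro G _ _ hcard hG
    by_cases htriv : Subsingleton G
    · refine ⟨1, one_pos, ?_⟩
      rw [pow_one]
      ext x
      simp only [Submodule.mem_bot, mem_augKer]
      constructor
      · intro hx
        have h1 : x = MonoidAlgebra.single (1 : G) (x.coeff 1) := by
          ext g
          have hg : g = (1 : G) := Subsingleton.elim g 1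
          rw [hg, MonoidAlgebra.coeff_single, Finsupp.single_eq_same]
        rw [h1, eps_single] at hx
        rw [h1, hx]; exact MonoidAlgebra.single_zero 1
      · rintro rfl; exact map_zero _
    · haveI : Nontrivial G := not_subsingleton_iff_nontrivial.mp htriv
      haveI := hG.center_nontrivial
      obtain ⟨z', hz'⟩ := exists_ne (1 : Subgroup.center G)
      set z : G := (z' : G) with hzdef
      have hz : z ∈ Subgroup.center G := z'.2
      have hz1 : z ≠ 1 := fun h => hz' (Subtype.ext h)
      set N := Subgroup.zpowers z with hN
      haveI hNnormal : N.Normal := by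
        constructor
        intro n hn g
        have hnc : n ∈ Subgroup.center G := (Subgroup.zpowers_le.mpr hz) hn
        have h : g * n * g⁻¹ = n := by
          rw [Subgroup.mem_center_iff] at hnc
          rw [hnc g, mul_inv_cancel_right]
        rwa [h]
      set Q := G ⧸ N with hQ
      have hGQ : IsPGroup p Q := hG.to_quotient N
      have hlt : Nat.card Q < m := by
        haveI : Nontrivial N :=
          ⟨⟨z, Subgroup.mem_zpowers z⟩, 1, fun h => hz1 (congrArg Subtype.val h)⟩
        have h1 : Nat.card G = Nat.card Q * Nat.card N :=
          Subgroup.card_eq_card_quotient_mul_card_subgroup N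
        have h2 : 1 < Nat.card N := Finite.one_lt_card
        have h3 : 0 < Nat.card Q := Nat.card_pos
        rw [← hcard, h1]
        exact (Nat.lt_mul_iff_one_lt_right h3).mpr h2
      obtain ⟨M, hM0, hMeq⟩ := ih (Nat.card Q) hlt Q inferInstance inferInstance rfl hGQ
      set π : MonoidAlgebra (ZMod p) G →ₐ[ZMod p] MonoidAlgebra (ZMod p) Q :=
        MonoidAlgebra.mapDomainAlgHom (ZMod p) (ZMod p) (QuotientGroup.mk' N) with hπ
      set c : MonoidAlgebra (ZMod p) G := MonoidAlgebra.single z 1 - 1 with hc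
      obtain ⟨e, he⟩ := hG z
      set q := p ^ e with hq
      have hq0 : 0 < q := pow_pos (Fact.out (p := p.Prime)).pos e
      -- characteristic p
      have hinj : Function.Injective (algebraMap (ZMod p) (MonoidAlgebra (ZMod p) G)) := by
        intro a b hab
        have h1 := congrArg (eps (ZMod p) G) hab
        rwa [AlgHom.commutes, AlgHom.commutes] at h1
      haveI : CharP (MonoidAlgebra (ZMod p) G) p := charP_of_injective_algebraMap hinj p
      have hcq : c ^ q = 0 := by
        rw [hc, hq, sub_pow_char_pow_of_commute _ _ (Commute.one_right _),
          MonoidAlgebra.single_pow, he, one_pow, one_pow, MonoidAlgebra.one_def, sub_self]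
      -- the augmentation commutes with π
      have hcomm : (eps (ZMod p) Q).comp π = eps (ZMod p) G := by
        apply MonoidAlgebra.algHom_ext
        intro g
        have hπg : π (MonoidAlgebra.single g 1) =
            MonoidAlgebra.single (QuotientGroup.mk' N g) (1 : ZMod p) :=
          MonoidAlgebra.mapDomain_single
        rw [AlgHom.comp_apply, hπg, eps_single, eps_single]
        exact Subsingleton.elim _ _
      -- I^M maps to zero under π
      have hIM : ∀ x ∈ (augKer (ZMod p) G) ^ M, π x = 0 := by
        have hmapI : Submodule.map π.toLinearMap (augKer (ZMod p) G) ≤ augKer (ZMod p) Q := by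
          rintro y ⟨x, hx, rfl⟩
          show eps (ZMod p) Q (π x) = 0
          rw [← AlgHom.comp_apply, hcomm]
          exact hx
        have hmappow : Submodule.map π.toLinearMap ((augKer (ZMod p) G) ^ M) = ⊥ := by
          rw [Submodule.map_pow]
          refine le_bot_iff.mp ?_
          calc (Submodule.map π.toLinearMap (augKer (ZMod p) G)) ^ M
              ≤ (augKer (ZMod p) Q) ^ M := pow_le_pow_submodule hmapI M
            _ = ⊥ := hMeq
        intro x hx
        have : π x ∈ Submodule.map π.toLinearMap ((augKer (ZMod p) G) ^ M) :=
          Submodule.mem_map_of_mem hx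
        rw [hmappow] at this
        exact this
      -- hence I^M ⊆ span {c}
      have hIMspan : (augKer (ZMod p) G) ^ M ≤
          Submodule.restrictScalars (ZMod p) (Ideal.span {c}) := by
        intro x hx
        have hpix : MonoidAlgebra.mapDomain (QuotientGroup.mk (s := N)) x = 0 := hIM x hx
        exact ker_mapDomain_le_span hz x hpix
      refine ⟨M * q, Nat.mul_pos hM0 hq0, ?_⟩
      refine le_bot_iff.mp ?_
      calc (augKer (ZMod p) G) ^ (M * q) = ((augKer (ZMod p) G) ^ M) ^ q := pow_mul _ M q
        _ ≤ (Submodule.restrictScalars (ZMod p) (Ideal.span {c})) ^ q :=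
            pow_le_pow_submodule hIMspan q
        _ ≤ Submodule.restrictScalars (ZMod p) (Ideal.span {c ^ q}) := span_c_pow_le hz q
        _ = ⊥ := by rw [hcq]; simp

end Main

section MatrixPart
variable {k A : Type*} [CommRing k] [Ring A] [Algebra k A] {n : ℕ}

lemma matrix_entries_mul {U V : Submodule k A} {X Y : Matrix (Fin n) (Fin n) A}
    (hX : ∀ i j, X i j ∈ U) (hY : ∀ i j, Y i j ∈ V) :
    ∀ i j, (X * Y) i j ∈ U * V := by
  intro i j
  rw [Matrix.mul_apply]
  exact sum_mem (fun l _ => Submodule.mul_mem_mul (hX i l) (hY l j))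

lemma matrix_pow_zero {U : Submodule k A} {N : ℕ} (hN : 0 < N) (hU : U ^ N = ⊥)
    {X : Matrix (Fin n) (Fin n) A} (hX : ∀ i j, X i j ∈ U) : X ^ N = 0 := by
  have key : ∀ m, ∀ i j, (X ^ (m + 1)) i j ∈ U ^ (m + 1) := by
    intro m
    induction m with
    | zero => simpa [pow_one] using hX
    | succ l ihl =>
        intro i j
        have h : X ^ (l + 1 + 1) = X ^ (l + 1) * X := pow_succ X (l + 1)
        rw [h, pow_succ]
        exact matrix_entries_mul ihl hX i j
  obtain ⟨m, rfl⟩ := Nat.exists_eq_add_of_lt hN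
  ext i j
  have := key (0 + m) i j
  rw [hU] at this
  simpa using this

end MatrixPart

/-- The augmentation homomorphism of a group ring `R[G]`, sending every group element
to `1`. -/
noncomputable def augmentation (R : Type*) [CommRing R] (G : Type*) [Group G] :
    MonoidAlgebra R G →+* R :=
  ((MonoidAlgebra.lift R R G) 1).toRingHom

set_option maxHeartbeats 4000000 in
/-- For a finite `p`-group `G`, every square matrix over `(ℤ/p)[G]` whose entrywise
augmentation is invertible over `ℤ/p` is itself invertible over `(ℤ/p)[G]`; equivalently,
the Cohn localization of `(ℤ/p)[G]` with respect to the augmentation is `(ℤ/p)[G]` itself. -/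
theorem monoidAlgebra_zmod_pGroup_matrix_isUnit (p : ℕ) [Fact p.Prime]
    (G : Type*) [Group G] [Finite G] (hG : IsPGroup p G)
    (n : ℕ) (A : Matrix (Fin n) (Fin n) (MonoidAlgebra (ZMod p) G))
    (hA : IsUnit (A.map (augmentation (ZMod p) G))) :
    IsUnit A := by
  classical
  set ε := augmentation (ZMod p) G with hε
  obtain ⟨Nn, hN0, hNeq⟩ :=
    augKer_pow_eq_bot p (Nat.card G) G inferInstance inferInstance rfl hG
  have hnil : ∀ X : Matrix (Fin n) (Fin n) (MonoidAlgebra (ZMod p) G),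
      X.map ε = 0 → X ^ Nn = 0 := by
    intro X hX
    apply matrix_pow_zero hN0 hNeq
    intro i j
    show eps (ZMod p) G (X i j) = 0
    have h := congrFun (congrFun hX i) j
    have h' : ε (X i j) = 0 := by simpa [Matrix.map_apply] using h
    exact h'
  have hsurj : Function.Surjective ε := fun a =>
    ⟨algebraMap (ZMod p) _ a, (eps (ZMod p) G).commutes a⟩
  obtain ⟨u, hu⟩ := hA
  set s : ZMod p → MonoidAlgebra (ZMod p) G := Function.surjInv hsurj with hs
  set Φ : Matrix (Fin n) (Fin n) (MonoidAlgebra (ZMod p) G) →+*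
      Matrix (Fin n) (Fin n) (ZMod p) := ε.mapMatrix with hΦdef
  have hΦ : ∀ X : Matrix (Fin n) (Fin n) (MonoidAlgebra (ZMod p) G),
      Φ X = X.map ε := fun X => RingHom.mapMatrix_apply ε X
  set B : Matrix (Fin n) (Fin n) (MonoidAlgebra (ZMod p) G) :=
    ((↑u⁻¹ : Matrix (Fin n) (Fin n) (ZMod p)).map s) with hB
  have hBmap : Φ B = (↑u⁻¹ : Matrix (Fin n) (Fin n) (ZMod p)) := by
    rw [hΦ, hB, Matrix.map_map]
    have hεs : ε ∘ s = id := funext fun a => Function.surjInv_eq hsurj a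
    rw [hεs, Matrix.map_id]
  have huA : Φ A = ↑u := by rw [hΦ, ← hu]
  have hAB : Φ (A * B - 1) = 0 := by
    rw [map_sub, map_mul, map_one, huA, hBmap, Units.mul_inv, sub_self]
  have hBA : Φ (B * A - 1) = 0 := by
    rw [map_sub, map_mul, map_one, huA, hBmap, Units.inv_mul, sub_self]
  have hABu : IsUnit (A * B) := by
    have h := IsNilpotent.isUnit_one_add ⟨Nn, hnil _ (by rw [← hΦ]; exact hAB)⟩
    simpa [add_sub_cancel] using h
  have hBAu : IsUnit (B * A) := by
    have h := IsNilpotent.isUnit_one_add ⟨Nn, hnil _ (by rw [← hΦ]; exact hBA)⟩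
    simpa [add_sub_cancel] using h
  obtain ⟨v, hv⟩ := hABu
  obtain ⟨w, hw⟩ := hBAu
  have hright : A * (B * v.inv) = 1 := by
    rw [← mul_assoc, ← hv]; exact v.val_inv
  have hleft : (w.inv * B) * A = 1 := by
    rw [mul_assoc, ← hw]; exact w.inv_val
  have hxy : w.inv * B = B * v.inv := by
    calc w.inv * B = (w.inv * B) * (A * (B * v.inv)) := by rw [hright, mul_one]
      _ = ((w.inv * B) * A) * (B * v.inv) := (mul_assoc _ A _).symm
      _ = B * v.inv := by rw [hleft, one_mul]
  exact ⟨⟨A, B * v.inv, hright, by rw [← hxy]; exact hleft⟩, rfl⟩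
end

section
/- Let f: A → B be a surjective ring homomorphism between (not necessarily commutative) rings, with kernel I. Suppose an A-module M has the property that for every index set X and every A-linear map α: F → F' between free left A-modules F and F' each with basis indexed by X, such that the induced map F/I·F → F'/I·F' is bijective, the precomposition map Hom_A(F', M) → Hom_A(F, M), h ↦ h ∘ α, is bijective. Then every submodule N ⊆ M satisfying N = I·N (where I·N is the submodule generated by all products r·x with r ∈ I and x ∈ N; equivalently N ⊗_A B = 0, i.e., N is perfect) is the zero submodule. -/
universe u u' v

/-- The submodule `I·N` of `M` generated by all products `r • x` with `r ∈ I`, `x ∈ N`. -/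
def idealSmul {A : Type*} [Ring A] (I : Ideal A) {M : Type*} [AddCommGroup M]
    [Module A M] (N : Submodule A M) : Submodule A M :=
  Submodule.span A {y : M | ∃ r ∈ I, ∃ x ∈ N, y = r • x}

/-- Every element of `I·N` can be written as a finite sum `∑ rᵢ • xᵢ` with `rᵢ ∈ I`, `xᵢ ∈ N`. -/
theorem idealSmul_rep {A : Type*} [Ring A] (I : Ideal A) {M : Type*} [AddCommGroup M]
    [Module A M] (N : Submodule A M) {n : M} (hn : n ∈ idealSmul I N) :
    ∃ c : N →₀ A, (∀ x : N, c x ∈ I) ∧ n = c.sum (fun x a => a • (x : M)) := by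
  induction hn using Submodule.span_induction with
  | mem y hy =>
    obtain ⟨r, hr, x, hx, rfl⟩ := hy
    classical
    refine ⟨Finsupp.single ⟨x, hx⟩ r, ?_, ?_⟩
    · intro z
      rw [Finsupp.single_apply]
      split <;> simp [hr, I.zero_mem]
    · rw [Finsupp.sum_single_index]
      exact zero_smul A _
  | zero => exact ⟨0, fun x => I.zero_mem, (Finsupp.sum_zero_index).symm⟩
  | add a b _ _ iha ihb =>
    obtain ⟨c₁, h₁, e₁⟩ := iha
    obtain ⟨c₂, h₂, e₂⟩ := ihb
    refine ⟨c₁ + c₂, fun x => I.add_mem (h₁ x) (h₂ x), ?_⟩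
    rw [e₁, e₂]
    exact (Finsupp.sum_add_index' (fun x => zero_smul A ((x : N) : M))
      (fun x b₁ b₂ => add_smul b₁ b₂ ((x : N) : M))).symm
  | smul a y _ ih =>
    obtain ⟨c, hc, e⟩ := ih
    refine ⟨a • c, fun x => ?_, ?_⟩
    · rw [Finsupp.smul_apply, smul_eq_mul]
      exact I.mul_mem_left a (hc x)
    · rw [Finsupp.sum_smul_index, e, Finsupp.smul_sum]
      · simp [mul_smul]
      · exact fun i => zero_smul A _

/-- Let `f : A → B` be a surjective ring homomorphism with kernel `I`.  If `M` is an
`A`-module which is local with respect to all maps `α : F → F'` between free `A`-modules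
with the same basis index set that become bijective modulo `I` (i.e. `Hom(F', M) → Hom(F, M)`
is bijective for all such `α`), then every perfect submodule `N` of `M` (one with
`N = I·N`) is zero. -/
theorem perfect_submodule_eq_bot_of_local {A : Type u} {B : Type u'} [Ring A] [Ring B]
    (f : A →+* B) (hf : Function.Surjective f)
    (M : Type v) [AddCommGroup M] [Module A M]
    (hM : ∀ (X : Type v) (α : (X →₀ A) →ₗ[A] (X →₀ A)),
      (∀ x : X →₀ A,
          α x ∈ idealSmul (RingHom.ker f) (⊤ : Submodule A (X →₀ A)) →
          x ∈ idealSmul (RingHom.ker f) (⊤ : Submodule A (X →₀ A))) →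
      (∀ y : X →₀ A, ∃ x : X →₀ A,
          y - α x ∈ idealSmul (RingHom.ker f) (⊤ : Submodule A (X →₀ A))) →
      Function.Bijective (fun h : (X →₀ A) →ₗ[A] M => h.comp α))
    (N : Submodule A M) (hN : N = idealSmul (RingHom.ker f) N) :
    N = ⊥ := by
  set I := RingHom.ker f with hI
  have key : ∀ n : N, ∃ c : N →₀ A, (∀ x : N, c x ∈ I) ∧
      (n : M) = c.sum (fun x a => a • (x : M)) :=
    fun n => idealSmul_rep I N (hN ▸ n.2)
  choose c hcI hcsum using key
  set J := idealSmul I (⊤ : Submodule A ((N : Type v) →₀ A)) with hJdef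
  have hJ : ∀ l : (N : Type v) →₀ A, (∀ x, l x ∈ I) → l ∈ J := by
    intro l hl
    rw [← l.sum_single]
    refine Submodule.sum_mem _ fun x _ => Submodule.subset_span ?_
    exact ⟨l x, hl x, Finsupp.single x 1, trivial, by rw [Finsupp.smul_single', mul_one]⟩
  set π : ((N : Type v) →₀ A) →ₗ[A] M := Finsupp.linearCombination A (Subtype.val : N → M) with hπ
  set β : ((N : Type v) →₀ A) →ₗ[A] ((N : Type v) →₀ A) := Finsupp.linearCombination A c with hβ
  have hβJ : ∀ l, β l ∈ J := by
    intro l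
    rw [hβ, Finsupp.linearCombination_apply]
    exact Submodule.sum_mem _ fun x _ => Submodule.smul_mem _ _ (hJ (c x) (hcI x))
  set α : ((N : Type v) →₀ A) →ₗ[A] ((N : Type v) →₀ A) := LinearMap.id - β with hα
  have h1 : ∀ x, α x ∈ J → x ∈ J := by
    intro x hx
    have : x = α x + β x := by simp [hα]
    rw [this]
    exact J.add_mem hx (hβJ x)
  have h2 : ∀ y, ∃ x, y - α x ∈ J := by
    intro y
    refine ⟨y, ?_⟩
    have : y - α y = β y := by simp [hα]
    rw [this]
    exact hβJ y
  have hbij := hM N α h1 h2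
  have hπα : π.comp α = 0 := by
    apply Finsupp.lhom_ext
    intro n b
    have hπc : π (c n) = (n : M) := by
      rw [hπ, Finsupp.linearCombination_apply, hcsum n]
    simp [hα, hβ, Finsupp.linearCombination_single, hπc, map_sub, hπ]
    rw [← hπ, hπc, sub_self]
  have hπ0 : π = 0 := by
    apply hbij.1
    simpa using hπα
  rw [eq_bot_iff]
  intro n hn
  have : (n : M) = π (Finsupp.single ⟨n, hn⟩ 1) := by
    rw [hπ, Finsupp.linearCombination_single, one_smul]
  rw [hπ0] at this
  simpa using this
end
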